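/- Let n ≥ 32 be even, let X, Y, X', Y' ∈ {0,1}^* with |X|, |Y|, |X'|, |Y'| < 2^{n/2} and not all four strings empty, let C, C' ∈ {0,1}^n, and let m be an integer with 1 ≤ m ≤ 2^32. Choose h_1, h_2 independently and uniformly at random from {0,1}^n and set S = C ⊕ H_{h_1}(X,Y) and S' = C' ⊕ H_{h_2}(X',Y'). Then Pr[ ⋁_{i=0}^{m−2} ( inc^i(S) ⊕ S' = 0 ) ] ≤ w_max · ℓ · (m−1) / 2^n, where ℓ is the maximum of the degrees of S and S' viewed as polynomials in h_1 and h_2 respectively. -/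

import Mathlib

/-- Integer represented by a bit string (msb-first). -/
def bitsToNat : List Bool → ℕ
  | [] => 0
  | b :: t => (if b then 2 ^ t.length else 0) + bitsToNat t

/-- An `n`-bit block from a bit string of length at most `n` (msb-first). -/
def blockToBV (n : ℕ) (l : List Bool) : BitVec n := BitVec.ofNat n (bitsToNat l)

/-- `pad`: append zeros on the right to get a full `n`-bit block. -/
def padBlock (n : ℕ) (l : List Bool) : BitVec n :=
  blockToBV n (l ++ List.replicate (n - l.length) false)

/-- `parse_n` followed by padding of the last block. -/
def blocksOf (n : ℕ) (Z : List Bool) : List (BitVec n) :=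
  (Z.toChunks n).map (padBlock n)

/-- Number of `n`-bit blocks obtained from parsing `Z`. -/
def numBlocks (n : ℕ) (Z : List Bool) : ℕ := (Z.toChunks n).length

/-- The length block `bin_{n/2}(|X|) ‖ bin_{n/2}(|T|)`. -/
def xcbLenBlock (n : ℕ) (X T : List Bool) : BitVec n :=
  BitVec.ofNat n (X.length * 2 ^ (n / 2) + T.length)

/-- The XCB hash `H_h(X,T) = X₁h^{m+p+1} ⊕ ⋯ ⊕ pad(X_m)h^{p+2} ⊕ T₁h^{p+1} ⊕ ⋯ ⊕
pad(T_p)h² ⊕ (bin_{n/2}(|X|)‖bin_{n/2}(|T|))h`, computed by Horner evaluation,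
where the equivalence `ι` identifies `{0,1}ⁿ` with `GF(2ⁿ)` (XOR = addition). -/
def xcbHash {n : ℕ} {F : Type*} [Field F] (ι : BitVec n ≃ F) (h : F)
    (X T : List Bool) : F :=
  ((blocksOf n X ++ blocksOf n T).map ι ++ [ι (xcbLenBlock n X T)]).foldl
    (fun acc c => (acc + c) * h) 0

/-- `inc`: increment the last 32 bits (as a nonnegative integer) modulo `2^32`,
leaving the first `n - 32` bits unchanged. -/
def incBV (n : ℕ) (X : BitVec n) : BitVec n :=
  BitVec.ofNat n (X.toNat / 2 ^ 32 * 2 ^ 32 + (X.toNat % 2 ^ 32 + 1) % 2 ^ 32)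

instance (w : ℕ) : Fintype (BitVec w) :=
  Fintype.ofEquiv (Fin (2 ^ w)) ⟨BitVec.ofFin, BitVec.toFin, fun _ => rfl, fun _ => rfl⟩

/-- `Y_r = { bin_32(int(Y) + r mod 2^32) ⊕ Y : Y ∈ {0,1}^32 }`. -/
def Yset (r : ℕ) : Finset (BitVec 32) :=
  Finset.univ.image fun Y : BitVec 32 => BitVec.ofNat 32 (Y.toNat + r) ^^^ Y

/-- `W_0 = Y_0`, and `W_r = Y_r \\ (Y_0 ∪ Y_1 ∪ ⋯ ∪ Y_{r-1})` for `r ≥ 1`. -/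
def Wset (r : ℕ) : Finset (BitVec 32) :=
  Yset r \ (Finset.range r).biUnion Yset

/-- `w_max = max { #W_r : 0 ≤ r ≤ 2^32 - 1 }`. -/
def wmax : ℕ := (Finset.range (2 ^ 32)).sup fun r => (Wset r).card

open Polynomial

lemma foldl_eval {F : Type*} [Field F] (L : List F) (x : F) (p : F[X]) :
    Polynomial.eval x (L.foldl (fun acc a => (acc + C a) * X) p)
      = L.foldl (fun acc a => (acc + a) * x) (Polynomial.eval x p) := by
  induction L generalizing p with
  | nil => rfl
  | cons a t ih => simp [List.foldl, ih]

lemma foldl_coeff0 {F : Type*} [Field F] (L : List F) (p : F[X]) (hp : p.coeff 0 = 0) :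
    (L.foldl (fun acc a => (acc + C a) * X) p).coeff 0 = 0 := by
  induction L generalizing p with
  | nil => exact hp
  | cons a t ih => exact ih _ (by simp [Polynomial.mul_coeff_zero])

lemma foldl_natDegree {F : Type*} [Field F] (L : List F) (p : F[X]) :
    (L.foldl (fun acc a => (acc + C a) * X) p).natDegree ≤ p.natDegree + L.length := by
  induction L generalizing p with
  | nil => simp
  | cons a t ih =>
    refine le_trans (ih _) ?_
    have h1 : ((p + C a) * X).natDegree ≤ p.natDegree + 1 := by
      refine le_trans (natDegree_mul_le) ?_
      have h2 := natDegree_add_le p (C a)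
      simp only [natDegree_X, natDegree_C] at h2 ⊢
      omega
    simp only [List.length_cons]
    omega

lemma hash_root_bound {n : ℕ} {F : Type*} [Field F] [DecidableEq F] (ι : BitVec n ≃ F)
    (hι0 : ι 0 = 0) (Z T : List Bool) (hlen : xcbLenBlock n Z T ≠ 0) (c : F) :
    (Finset.univ.filter fun h : BitVec n => xcbHash ι (ι h) Z T = c).card
      ≤ numBlocks n Z + numBlocks n T + 1 := by
  set L : List F := (blocksOf n Z ++ blocksOf n T).map ι with hL
  set c₀ : F := ι (xcbLenBlock n Z T) with hc0def
  have hc₀ : c₀ ≠ 0 := by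
    intro h
    exact hlen (ι.injective (h.trans hι0.symm))
  set P : F[X] := (L ++ [c₀]).foldl (fun acc a => (acc + C a) * X) 0 with hP
  have heval : ∀ x : F, xcbHash ι x Z T = Polynomial.eval x P := by
    intro x
    rw [hP, foldl_eval]
    simp only [Polynomial.eval_zero]
    rfl
  have hcoeff1 : P.coeff 1 = c₀ := by
    rw [hP, List.foldl_append]
    simp only [List.foldl]
    rw [Polynomial.coeff_mul_X]
    rw [Polynomial.coeff_add, foldl_coeff0 _ _ (by simp), Polynomial.coeff_C]
    simp
  have hdeg : P.natDegree ≤ L.length + 1 := by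
    have h := foldl_natDegree (L ++ [c₀]) (0 : F[X])
    rw [← hP] at h
    simp only [natDegree_zero, List.length_append, List.length_singleton] at h
    omega

  have hQ : P - C c ≠ 0 := by
    intro h
    have : (P - C c).coeff 1 = 0 := by rw [h]; simp
    rw [Polynomial.coeff_sub, hcoeff1, Polynomial.coeff_C] at this
    simp at this
    exact hc₀ this
  have hQdeg : (P - C c).natDegree ≤ L.length + 1 := by
    refine le_trans (natDegree_sub_le _ _) ?_
    simp only [natDegree_C]
    omega
  have hsub : (Finset.univ.filter fun h : BitVec n => xcbHash ι (ι h) Z T = c).card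
      ≤ (P - C c).roots.toFinset.card := by
    apply Finset.card_le_card_of_injOn (fun h => ι h)
    · intro h hh
      simp only [Finset.mem_coe, Finset.mem_filter] at hh ⊢
      rw [Multiset.mem_toFinset, Polynomial.mem_roots hQ]
      simp only [IsRoot, Polynomial.eval_sub, Polynomial.eval_C]
      rw [← heval, hh.2, sub_self]
    · intro a _ b _ hab
      exact ι.injective hab
  have hlen' : L.length = numBlocks n Z + numBlocks n T := by
    simp [hL, blocksOf, numBlocks]
  calc (Finset.univ.filter fun h : BitVec n => xcbHash ι (ι h) Z T = c).card
      ≤ (P - C c).roots.toFinset.card := hsub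
    _ ≤ Multiset.card (P - C c).roots := Multiset.toFinset_card_le _
    _ ≤ (P - C c).natDegree := Polynomial.card_roots' _
    _ ≤ L.length + 1 := hQdeg
    _ = numBlocks n Z + numBlocks n T + 1 := by rw [hlen']

lemma incBV_toNat {n : ℕ} (hn : 32 ≤ n) (X : BitVec n) :
    (incBV n X).toNat = X.toNat / 2 ^ 32 * 2 ^ 32 + (X.toNat % 2 ^ 32 + 1) % 2 ^ 32 := by
  have hX := X.isLt
  have he : 2 ^ n = 2 ^ (n - 32) * 2 ^ 32 := by
    rw [← pow_add]
    congr 1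
    omega
  have h32 : (2 : ℕ) ^ 32 = 4294967296 := by norm_num
  rw [incBV, BitVec.toNat_ofNat]
  apply Nat.mod_eq_of_lt
  rw [h32] at *
  omega

lemma incBV_injective {n : ℕ} (hn : 32 ≤ n) : Function.Injective (incBV n) := by
  intro a b hab
  have h := congrArg BitVec.toNat hab
  rw [incBV_toNat hn, incBV_toNat hn] at h
  have h32 : (2 : ℕ) ^ 32 = 4294967296 := by norm_num
  rw [h32] at h
  apply BitVec.eq_of_toNat_eq
  omega

lemma wmax_pos : 1 ≤ wmax := by
  have h0 : Wset 0 = Yset 0 := by simp [Wset]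
  have hne : (Yset 0).Nonempty := ⟨_, Finset.mem_image_of_mem _ (Finset.mem_univ (0 : BitVec 32))⟩
  calc 1 ≤ (Wset 0).card := by rw [h0]; exact hne.card_pos
    _ ≤ wmax := Finset.le_sup (f := fun r => (Wset r).card) (Finset.mem_range.mpr (Nat.pow_pos (by norm_num)))

lemma lenBlock_ne_zero {n : ℕ} (hn : 32 ≤ n) (hEven : Even n) (Z T : List Bool)
    (hZ : Z.length < 2 ^ (n / 2)) (hT : T.length < 2 ^ (n / 2))
    (hne : ¬ (Z = [] ∧ T = [])) : xcbLenBlock n Z T ≠ 0 := by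
  have hhalf : n / 2 + n / 2 = n := by
    obtain ⟨k, hk⟩ := hEven
    omega
  have hlt : Z.length * 2 ^ (n / 2) + T.length < 2 ^ n := by
    calc Z.length * 2 ^ (n / 2) + T.length
        < Z.length * 2 ^ (n / 2) + 2 ^ (n / 2) := by omega
      _ = (Z.length + 1) * 2 ^ (n / 2) := by ring
      _ ≤ 2 ^ (n / 2) * 2 ^ (n / 2) := Nat.mul_le_mul_right _ (by omega)
      _ = 2 ^ n := by rw [← pow_add, hhalf]
  have hpos : 0 < Z.length * 2 ^ (n / 2) + T.length := by
    rcases Nat.eq_zero_or_pos (Z.length * 2 ^ (n / 2) + T.length) with h0 | h0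
    · exfalso
      have hKpos : 0 < 2 ^ (n / 2) := Nat.pow_pos (by norm_num)
      have hZ0 : Z.length * 2 ^ (n / 2) = 0 := by omega
      have hT0 : T.length = 0 := by omega
      rcases Nat.mul_eq_zero.mp hZ0 with hZ0' | hbad
      · exact hne ⟨List.length_eq_zero_iff.mp hZ0', List.length_eq_zero_iff.mp hT0⟩
      · omega
    · exact h0
  intro h
  have h2 : (xcbLenBlock n Z T).toNat = 0 := by rw [h]; simp
  rw [xcbLenBlock, BitVec.toNat_ofNat, Nat.mod_eq_of_lt hlt] at h2
  omega

lemma xcbHash_nil {n : ℕ} {F : Type*} [Field F] (ι : BitVec n ≃ F) (hι0 : ι 0 = 0) (h : F) :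
    xcbHash ι h [] [] = 0 := by
  have h0 : xcbLenBlock n [] [] = 0 := by simp [xcbLenBlock]
  have hb : blocksOf n ([] : List Bool) = [] := by
    rw [blocksOf]
    have : List.toChunks n ([] : List Bool) = [] := by cases n <;> rfl
    rw [this, List.map_nil]
  rw [xcbHash, hb, h0, hι0]
  simp

lemma card_bitvec (n : ℕ) : Fintype.card (BitVec n) = 2 ^ n := by
  rw [← Fintype.card_fin (2 ^ n)]
  exact Fintype.card_congr ⟨BitVec.toFin, BitVec.ofFin, fun _ => rfl, fun _ => rfl⟩

lemma xor_left_injective {n : ℕ} (a : BitVec n) :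
    Function.Injective (fun x : BitVec n => a ^^^ x) := by
  intro x y h
  have h2 := congrArg (fun z => a ^^^ z) h
  simpa [← BitVec.xor_assoc] using h2

lemma xor_left_eq {n : ℕ} (a b c : BitVec n) : a ^^^ b = c ↔ b = a ^^^ c := by
  constructor
  · rintro rfl; simp [← BitVec.xor_assoc]
  · rintro rfl; simp [← BitVec.xor_assoc]

/-- Part 2 of Lemma 4.0.2: with two independent random hash keys `h₁, h₂`, for
`S = C ⊕ H_{h₁}(X,Y)` and `S' = C' ⊕ H_{h₂}(X',Y')` (not all of `X, Y, X', Y'` empty),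
`Pr[⋁_{i=0}^{m-2} inc^i(S) = S'] ≤ w_max·ℓ·(m-1)/2ⁿ`, where `ℓ` is the maximum of
the degrees of `S` and `S'` as polynomials in `h₁` resp. `h₂`. -/
theorem inc_collision_prob_two_keys (n : ℕ) (hn : 32 ≤ n) (hEven : Even n)
    (F : Type*) [Field F] (ι : BitVec n ≃ F)
    (hι : ∀ x y : BitVec n, ι (x ^^^ y) = ι x + ι y)
    (X Y X' Y' : List Bool) (hne : ¬ (X = [] ∧ Y = [] ∧ X' = [] ∧ Y' = []))
    (hX : X.length < 2 ^ (n / 2)) (hY : Y.length < 2 ^ (n / 2))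
    (hX' : X'.length < 2 ^ (n / 2)) (hY' : Y'.length < 2 ^ (n / 2))
    (C C' : BitVec n) (m : ℕ) (hm1 : 1 ≤ m) (hm2 : m ≤ 2 ^ 32)
    (ℓ : ℕ) (hℓ : ℓ = max (numBlocks n X + numBlocks n Y + 1)
      (numBlocks n X' + numBlocks n Y' + 1)) :
    (Nat.card {hks : BitVec n × BitVec n //
        ∃ i < m - 1,
          (incBV n)^[i] (C ^^^ ι.symm (xcbHash ι (ι hks.1) X Y)) =
            C' ^^^ ι.symm (xcbHash ι (ι hks.2) X' Y')} : ℝ) /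
        ((2 : ℝ) ^ n * (2 : ℝ) ^ n) ≤
      ((wmax * ℓ * (m - 1) : ℕ) : ℝ) / ((2 : ℝ) ^ n) := by
  classical
  have hι0 : ι 0 = 0 := by
    have h := hι 0 0
    rw [BitVec.xor_self] at h
    exact left_eq_add.mp h
  have hsymm0 : ι.symm 0 = 0 := by rw [← hι0, Equiv.symm_apply_apply]
  set B : ℕ → Finset (BitVec n × BitVec n) := fun i =>
    Finset.univ.filter (fun hks : BitVec n × BitVec n =>
      (incBV n)^[i] (C ^^^ ι.symm (xcbHash ι (ι hks.1) X Y)) =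
        C' ^^^ ι.symm (xcbHash ι (ι hks.2) X' Y')) with hB
  have hAi : ∀ i, (B i).card ≤ ℓ * 2 ^ n := by
    intro i
    by_cases hE : X' = [] ∧ Y' = []
    · -- the second pair is empty: S' = C' is constant
      obtain ⟨hXe, hYe⟩ := hE
      subst hXe; subst hYe
      have hS2 : ∀ h2 : BitVec n, C' ^^^ ι.symm (xcbHash ι (ι h2) [] []) = C' := by
        intro h2
        rw [xcbHash_nil ι hι0, hsymm0]
        simp
      have hBeq : B i = (Finset.univ.filter (fun h1 : BitVec n =>
          (incBV n)^[i] (C ^^^ ι.symm (xcbHash ι (ι h1) X Y)) = C')) ×ˢ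
          (Finset.univ : Finset (BitVec n)) := by
        ext x
        simp only [hB, Finset.mem_filter, Finset.mem_product, Finset.mem_univ, true_and, and_true]
        rw [hS2]
      rw [hBeq, Finset.card_product, Finset.card_univ, card_bitvec]
      refine Nat.mul_le_mul_right _ ?_
      have hXYne : ¬ (X = [] ∧ Y = []) := fun ⟨a, b⟩ => hne ⟨a, b, rfl, rfl⟩
      have hd1 : numBlocks n X + numBlocks n Y + 1 ≤ ℓ := hℓ ▸ le_max_left _ _
      have hlenXY := lenBlock_ne_zero hn hEven X Y hX hY hXYne
      by_cases hex : ∃ t : BitVec n, (incBV n)^[i] (C ^^^ t) = C'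
      · obtain ⟨t, ht⟩ := hex
        have hinj : Function.Injective (fun v : BitVec n => (incBV n)^[i] (C ^^^ v)) := by
          intro a b hab
          exact xor_left_injective C (((incBV_injective hn).iterate i) hab)
        have hiff : ∀ h1 : BitVec n,
            ((incBV n)^[i] (C ^^^ ι.symm (xcbHash ι (ι h1) X Y)) = C') ↔
              xcbHash ι (ι h1) X Y = ι t := by
          intro h1
          constructor
          · intro h
            have h2 : ι.symm (xcbHash ι (ι h1) X Y) = t := hinj (h.trans ht.symm)
            rw [← h2, Equiv.apply_symm_apply]
          · intro h
            have h2 : ι.symm (xcbHash ι (ι h1) X Y) = t := by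
              rw [h, Equiv.symm_apply_apply]
            rw [h2]
            exact ht
        rw [Finset.filter_congr (fun x _ => hiff x)]
        exact le_trans (hash_root_bound ι hι0 X Y hlenXY (ι t)) hd1
      · have hempty : (Finset.univ.filter (fun h1 : BitVec n =>
            (incBV n)^[i] (C ^^^ ι.symm (xcbHash ι (ι h1) X Y)) = C')) = ∅ := by
          rw [Finset.filter_eq_empty_iff]
          intro h1 _
          exact fun hcon => hex ⟨ι.symm (xcbHash ι (ι h1) X Y), hcon⟩
        rw [hempty]
        simp
    · -- the second pair is nonempty: root counting in h₂ for every fixed h₁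
      have hd2 : numBlocks n X' + numBlocks n Y' + 1 ≤ ℓ := hℓ ▸ le_max_right _ _
      have hlen' := lenBlock_ne_zero hn hEven X' Y' hX' hY' hE
      rw [Finset.card_eq_sum_card_fiberwise
        (f := Prod.fst) (t := Finset.univ) (fun x _ => Finset.mem_univ _)]
      have hfiber : ∀ h1 : BitVec n, ((B i).filter fun x => x.1 = h1).card ≤ ℓ := by
        intro h1
        set c : F := ι (C' ^^^ (incBV n)^[i] (C ^^^ ι.symm (xcbHash ι (ι h1) X Y))) with hc
        refine le_trans ?_ (le_trans (hash_root_bound ι hι0 X' Y' hlen' c) hd2)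
        apply Finset.card_le_card_of_injOn Prod.snd
        · intro x hx
          simp only [hB, Finset.mem_coe, Finset.mem_filter, Finset.mem_univ, true_and] at hx
          obtain ⟨hcond, hfst⟩ := hx
          subst hfst
          simp only [Finset.mem_coe, Finset.mem_filter, Finset.mem_univ, true_and]
          have h2 : ι.symm (xcbHash ι (ι x.2) X' Y') =
              C' ^^^ (incBV n)^[i] (C ^^^ ι.symm (xcbHash ι (ι x.1) X Y)) :=
            (xor_left_eq _ _ _).mp hcond.symm
          rw [hc, ← h2, Equiv.apply_symm_apply]
        · intro x hx y hy hxy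
          rw [Finset.mem_coe, Finset.mem_filter] at hx hy
          exact Prod.ext (hx.2.trans hy.2.symm) hxy
      calc ∑ h1 : BitVec n, ((B i).filter fun x => x.1 = h1).card
          ≤ ∑ _h1 : BitVec n, ℓ := Finset.sum_le_sum (fun h1 _ => hfiber h1)
        _ = 2 ^ n * ℓ := by rw [Finset.sum_const, Finset.card_univ, card_bitvec, smul_eq_mul]
        _ = ℓ * 2 ^ n := mul_comm _ _
  -- assemble the counting bound
  have hNat : (Nat.card {hks : BitVec n × BitVec n //
        ∃ i < m - 1,
          (incBV n)^[i] (C ^^^ ι.symm (xcbHash ι (ι hks.1) X Y)) =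
            C' ^^^ ι.symm (xcbHash ι (ι hks.2) X' Y')})
      = (Finset.univ.filter (fun hks : BitVec n × BitVec n =>
          ∃ i < m - 1,
            (incBV n)^[i] (C ^^^ ι.symm (xcbHash ι (ι hks.1) X Y)) =
              C' ^^^ ι.symm (xcbHash ι (ι hks.2) X' Y'))).card := by
    rw [Nat.card_eq_fintype_card]
    exact Fintype.card_subtype _
  have hsub : (Finset.univ.filter (fun hks : BitVec n × BitVec n =>
      ∃ i < m - 1,
        (incBV n)^[i] (C ^^^ ι.symm (xcbHash ι (ι hks.1) X Y)) =
          C' ^^^ ι.symm (xcbHash ι (ι hks.2) X' Y'))) ⊆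
      (Finset.range (m - 1)).biUnion B := by
    intro x hx
    simp only [Finset.mem_filter, Finset.mem_univ, true_and] at hx
    obtain ⟨i, hi, hcol⟩ := hx
    simp only [Finset.mem_biUnion, Finset.mem_range, hB, Finset.mem_filter, Finset.mem_univ,
      true_and]
    exact ⟨i, hi, hcol⟩
  have hcard : (Finset.univ.filter (fun hks : BitVec n × BitVec n =>
      ∃ i < m - 1,
        (incBV n)^[i] (C ^^^ ι.symm (xcbHash ι (ι hks.1) X Y)) =
          C' ^^^ ι.symm (xcbHash ι (ι hks.2) X' Y'))).card ≤ wmax * ℓ * (m - 1) * 2 ^ n := by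
    refine le_trans (Finset.card_le_card hsub) (le_trans Finset.card_biUnion_le ?_)
    calc ∑ i ∈ Finset.range (m - 1), (B i).card
        ≤ ∑ _i ∈ Finset.range (m - 1), ℓ * 2 ^ n := Finset.sum_le_sum (fun i _ => hAi i)
      _ = (m - 1) * (ℓ * 2 ^ n) := by rw [Finset.sum_const, Finset.card_range, smul_eq_mul]
      _ = 1 * (ℓ * (m - 1) * 2 ^ n) := by ring
      _ ≤ wmax * (ℓ * (m - 1) * 2 ^ n) := Nat.mul_le_mul_right _ wmax_pos
      _ = wmax * ℓ * (m - 1) * 2 ^ n := by ring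
  rw [hNat]
  have h2n : (0 : ℝ) < (2 : ℝ) ^ n := by positivity
  rw [div_le_div_iff₀ (by positivity) h2n]
  have hle : ((Finset.univ.filter (fun hks : BitVec n × BitVec n =>
      ∃ i < m - 1,
        (incBV n)^[i] (C ^^^ ι.symm (xcbHash ι (ι hks.1) X Y)) =
          C' ^^^ ι.symm (xcbHash ι (ι hks.2) X' Y'))).card : ℝ)
      ≤ ((wmax * ℓ * (m - 1) * 2 ^ n : ℕ) : ℝ) := Nat.cast_le.mpr hcard
  have hc2 : ((wmax * ℓ * (m - 1) * 2 ^ n : ℕ) : ℝ) =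
      ((wmax * ℓ * (m - 1) : ℕ) : ℝ) * (2 : ℝ) ^ n := by
    rw [Nat.cast_mul, Nat.cast_pow]
    rw [Nat.cast_ofNat]
  refine le_trans (mul_le_mul_of_nonneg_right (le_trans hle (le_of_eq hc2)) h2n.le)
    (le_of_eq (by ring))
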